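/- With c1 = 1/105 and, as |x| → ∞, c2 = -(1/15)·sgn(x)·6^{1/3} + O(|x|^{-2/3}) and c3 = 6^{-1/3} + O(|x|^{-2/3}), where c2 = z0/30, c3 = z0^2/36 - sgn(x)·2/(3z0) and z0 is the real root of z0^3 = -48·sgn(x) + 24 z0 |x|^{-2/3} T. -/

import Mathlib

set_option maxHeartbeats 1600000 in
lemma key_c2c3 (T ε u : ℝ) (hε : 0 < ε) (hεT : ε * (|T| + 1) ≤ 1/96)
    (hu : u ^ 3 = -48 + 24 * u * ε * T) :
    |u / 30 - (-2 * (6:ℝ) ^ ((1:ℝ)/3) / 30)| ≤ 16 * (|T| + 1) * ε ∧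
    |u ^ 2 / 36 - 2 / (3 * u) - (6:ℝ) ^ (-(1:ℝ)/3)| ≤ 16 * (|T| + 1) * ε := by
  set b := (6:ℝ) ^ ((1:ℝ)/3) with hbdef
  have hb0 : 0 < b := Real.rpow_pos_of_pos (by norm_num) _
  have hb3 : b ^ 3 = 6 := by
    rw [hbdef, ← Real.rpow_natCast ((6:ℝ) ^ ((1:ℝ)/3)) 3,
      ← Real.rpow_mul (by norm_num : (0:ℝ) ≤ 6)]
    norm_num
  have hbneg : (6:ℝ) ^ (-(1:ℝ)/3) = 1 / b := by
    rw [hbdef, show (-(1:ℝ)/3) = -((1:ℝ)/3) by ring,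
      Real.rpow_neg (by norm_num : (0:ℝ) ≤ 6)]
    exact (one_div _).symm
  have hb1 : 1.5 ≤ b := by nlinarith [sq_nonneg (b - 1.5), sq_nonneg b, sq_nonneg (b + 1.5)]
  have hb2 : b ≤ 2 := by nlinarith [sq_nonneg (b - 2), sq_nonneg b, sq_nonneg (b + 2)]
  set K := |T| + 1 with hKdef
  have hK1 : 1 ≤ K := by have := abs_nonneg T; linarith
  have hεK : 0 < ε * K := by positivity
  have hTK : |T| ≤ K := by linarith
  -- bound on the perturbation term
  have habsT : |24 * u * ε * T| ≤ |u| / 4 := by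
    have h1 : |24 * u * ε * T| = 24 * |u| * (ε * |T|) := by
      rw [abs_mul, abs_mul, abs_mul, abs_of_nonneg hε.le]
      norm_num; ring
    have h2 : ε * |T| ≤ 1/96 := le_trans (by nlinarith) hεT
    rw [h1]
    nlinarith [abs_nonneg u]
  obtain ⟨hp1, hp2⟩ := abs_le.mp habsT
  -- u is negative
  have hu0 : u < 0 := by
    by_contra h
    push_neg at h
    have habs : |u| = u := abs_of_nonneg h
    rw [habs] at hp2
    nlinarith [sq_nonneg (u - 1), sq_nonneg u]
  have habs : |u| = -u := abs_of_neg hu0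
  rw [habs] at hp1 hp2
  have hu3 : u ≤ -3 := by nlinarith [sq_nonneg (u + 3), sq_nonneg u]
  have hu4 : -4 ≤ u := by nlinarith [sq_nonneg (u + 4), sq_nonneg u]
  set w : ℝ := -2 * b with hwdef
  have hw3 : w ^ 3 = -48 := by rw [hwdef]; linear_combination (-8:ℝ) * hb3
  have hw4 : -4 ≤ w := by rw [hwdef]; linarith
  have hw3' : w ≤ -3 := by rw [hwdef]; linarith
  have hQ : 27 ≤ u ^ 2 + u * w + w ^ 2 := by
    nlinarith [mul_nonneg (by linarith : (0:ℝ) ≤ -u - 3) (by linarith : (0:ℝ) ≤ -w - 3),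
      sq_nonneg (u + 3), sq_nonneg (w + 3)]
  have heq : (u - w) * (u ^ 2 + u * w + w ^ 2) = 24 * u * ε * T := by
    linear_combination hu - hw3
  have habsT2 : |24 * u * ε * T| ≤ 96 * (ε * K) := by
    have h1 : |24 * u * ε * T| = 24 * |u| * (ε * |T|) := by
      rw [abs_mul, abs_mul, abs_mul, abs_of_nonneg hε.le]
      norm_num; ring
    rw [h1, habs]
    have h2 : ε * |T| ≤ ε * K := by nlinarith [abs_nonneg T]
    nlinarith [mul_nonneg (by linarith : (0:ℝ) ≤ 4 + u)
      (mul_nonneg hε.le (abs_nonneg T)), mul_nonneg hε.le (abs_nonneg T)]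
  -- distance bound: |u - w| ≤ 4 ε K
  have hd : |u - w| ≤ 4 * (ε * K) := by
    have h96 : |u - w| * 27 ≤ 96 * (ε * K) := by
      calc |u - w| * 27 ≤ |u - w| * (u ^ 2 + u * w + w ^ 2) := by
            nlinarith [abs_nonneg (u - w)]
        _ = |(u - w) * (u ^ 2 + u * w + w ^ 2)| := by
            rw [abs_mul, abs_of_nonneg (by linarith : (0:ℝ) ≤ u ^ 2 + u * w + w ^ 2)]
        _ = |24 * u * ε * T| := by rw [heq]
        _ ≤ 96 * (ε * K) := habsT2
    nlinarith
  obtain ⟨hd1, hd2⟩ := abs_le.mp hd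
  constructor
  · have h : u / 30 - (-2 * b / 30) = (u - w) / 30 := by rw [hwdef]; ring
    rw [h, abs_div, abs_of_nonneg (by norm_num : (0:ℝ) ≤ 30),
      div_le_iff₀ (by norm_num : (0:ℝ) < 30)]
    calc |u - w| ≤ 4 * (ε * K) := hd
      _ ≤ 16 * K * ε * 30 := by nlinarith
  · -- c3 bound
    have hune : u ≠ 0 := ne_of_lt hu0
    have hbne : b ≠ 0 := ne_of_gt hb0
    set M : ℝ := 36 * (u - w) - 24 * u * ε * T * b with hMdef
    set P : ℝ := (-36 * u) * b with hPdef
    have hP0 : 0 < P := by rw [hPdef]; nlinarith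
    have hP162 : 162 ≤ P := by rw [hPdef]; nlinarith
    have hrw : u ^ 2 / 36 - 2 / (3 * u) - (6:ℝ) ^ (-(1:ℝ)/3) = M / P := by
      rw [hbneg, hMdef, hPdef, hwdef]
      field_simp
      linear_combination (3 * b) * hu
    have hMabs : |M| ≤ 336 * (ε * K) := by
      have h1 : |24 * u * ε * T * b| ≤ 192 * (ε * K) := by
        rw [abs_mul, abs_of_pos hb0]
        nlinarith [abs_nonneg (24 * u * ε * T)]
      have h2 : |36 * (u - w)| ≤ 144 * (ε * K) := by
        rw [abs_mul, abs_of_nonneg (by norm_num : (0:ℝ) ≤ 36)]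
        nlinarith [abs_nonneg (u - w)]
      calc |M| ≤ |36 * (u - w)| + |24 * u * ε * T * b| := by
            rw [hMdef]; exact abs_sub _ _
        _ ≤ 336 * (ε * K) := by linarith
    rw [hrw, abs_div, abs_of_pos hP0, div_le_iff₀ hP0]
    nlinarith [abs_nonneg M, mul_nonneg (mul_nonneg hε.le (by linarith : (0:ℝ) ≤ K))
      (by linarith : (0:ℝ) ≤ P - 162)]

/-- Asymptotics of the coefficients c2 = z0/30 and c3 = z0²/36 - sgn(x)·2/(3z0):
c2 = -(1/15) sgn(x) 6^{1/3} + O(|x|^{-2/3}) and c3 = 6^{-1/3} + O(|x|^{-2/3})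
as |x| → ∞, where z0 is the real root of z0³ = -48 sgn(x) + 24 z0 |x|^{-2/3} T. -/
theorem c2_c3_asymptotics (T : ℝ) :
    ∃ C X : ℝ, 0 < C ∧ 0 < X ∧ ∀ x : ℝ, X ≤ |x| → ∀ z0 : ℝ,
      z0 ^ 3 = -48 * Real.sign x + 24 * z0 * |x| ^ (-(2:ℝ)/3) * T →
      |z0/30 - (-(1/15) * Real.sign x * (6:ℝ) ^ ((1:ℝ)/3))| ≤ C * |x| ^ (-(2:ℝ)/3) ∧
      |z0^2/36 - Real.sign x * 2/(3*z0) - (6:ℝ) ^ (-(1:ℝ)/3)| ≤ C * |x| ^ (-(2:ℝ)/3) := by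
  set K := |T| + 1 with hKdef
  have hK1 : 1 ≤ K := by have := abs_nonneg T; linarith
  set δ : ℝ := 1 / (96 * K) with hδdef
  have hδ0 : 0 < δ := by rw [hδdef]; positivity
  refine ⟨16 * K, δ ^ (-(3:ℝ)/2), by linarith, Real.rpow_pos_of_pos hδ0 _, ?_⟩
  intro x hX z0 hz0
  have hx0 : 0 < |x| := lt_of_lt_of_le (Real.rpow_pos_of_pos hδ0 _) hX
  set ε : ℝ := |x| ^ (-(2:ℝ)/3) with hεdef
  have hε0 : 0 < ε := Real.rpow_pos_of_pos hx0 _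
  have hεδ : ε ≤ δ := by
    have h1 : ε ≤ (δ ^ (-(3:ℝ)/2)) ^ (-(2:ℝ)/3) :=
      Real.rpow_le_rpow_of_nonpos (Real.rpow_pos_of_pos hδ0 _) hX (by norm_num)
    have h2 : (δ ^ (-(3:ℝ)/2)) ^ (-(2:ℝ)/3) = δ := by
      rw [← Real.rpow_mul hδ0.le]
      norm_num
    rwa [h2] at h1
  have hεT : ε * (|T| + 1) ≤ 1/96 := by
    have : ε * K ≤ δ * K := by nlinarith
    rw [hδdef] at this
    rw [← hKdef]
    have hK0 : (0:ℝ) < 96 * K := by linarith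
    calc ε * K ≤ 1 / (96 * K) * K := this
      _ = 1 / 96 := by field_simp
  have hxne : x ≠ 0 := by
    intro h; rw [h, abs_zero] at hx0; exact lt_irrefl _ hx0
  rcases hxne.lt_or_gt with hneg | hpos
  · -- x < 0, sign = -1
    rw [Real.sign_of_neg hneg] at hz0 ⊢
    have hu : (-z0) ^ 3 = -48 + 24 * (-z0) * ε * T := by
      linear_combination (-1:ℝ) * hz0
    obtain ⟨h1, h2⟩ := key_c2c3 T ε (-z0) hε0 hεT hu
    constructor
    · have he : z0/30 - (-(1/15) * (-1) * (6:ℝ) ^ ((1:ℝ)/3)) =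
          -((-z0) / 30 - (-2 * (6:ℝ) ^ ((1:ℝ)/3) / 30)) := by ring
      rw [he, abs_neg]
      exact h1
    · have he : z0 ^ 2 / 36 - (-1) * 2 / (3 * z0) - (6:ℝ) ^ (-(1:ℝ)/3) =
          (-z0) ^ 2 / 36 - 2 / (3 * (-z0)) - (6:ℝ) ^ (-(1:ℝ)/3) := by
        rw [show (3:ℝ) * (-z0) = -(3 * z0) by ring, div_neg]
        ring
      rw [he]
      exact h2
  · -- x > 0, sign = 1
    rw [Real.sign_of_pos hpos] at hz0 ⊢
    have hu : z0 ^ 3 = -48 + 24 * z0 * ε * T := by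
      linear_combination hz0
    obtain ⟨h1, h2⟩ := key_c2c3 T ε z0 hε0 hεT hu
    constructor
    · have he : z0/30 - (-(1/15) * 1 * (6:ℝ) ^ ((1:ℝ)/3)) =
          z0 / 30 - (-2 * (6:ℝ) ^ ((1:ℝ)/3) / 30) := by ring
      rw [he]
      exact h1
    · have he : z0 ^ 2 / 36 - 1 * 2 / (3 * z0) - (6:ℝ) ^ (-(1:ℝ)/3) =
          z0 ^ 2 / 36 - 2 / (3 * z0) - (6:ℝ) ^ (-(1:ℝ)/3) := by ring
      rw [he]
      exact h2
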